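/- Reversing a unidirectional 1-loop changes the height only at the enclosed dual point, by exactly 2: let (h,v) satisfy the 19-vertex rule at every vertex of ℤ² and carry a counterclockwise unidirectional 1-loop on the unit square at (x,y), and let (h',v') be obtained by negating the four edge values h(x,y), h(x,y+1), v(x,y), v(x+1,y). If g is a height function for (h,v) and g' is a height function for (h',v') normalized so that g'(x₀,y₀) = g(x₀,y₀) at some dual point (x₀,y₀) ≠ (x,y), then g'(p) = g(p) for every dual point p ≠ (x,y), and g'(x,y) = g(x,y) + 2. -/

import Mathlib

lemma constZ_aux (F : ℤ → ℤ) (hF : ∀ n : ℤ, F (n + 1) = F n) : ∀ m n : ℤ, F m = F n := by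
  have key : ∀ n : ℤ, F n = F 0 := by
    intro n
    induction n using Int.induction_on with
    | zero => rfl
    | succ k ih => rw [hF]; exact ih
    | pred k ih =>
      have h2 := hF (-(k : ℤ) - 1)
      rw [show (-(k : ℤ) - 1) + 1 = -k by ring] at h2
      rw [← h2]; exact ih
  intro m n; rw [key m, key n]

/-- Reversing a unidirectional 1-loop changes the height only at the enclosed dual
point, by exactly `2`: if `(h, v)` is legal and carries a counterclockwise
unidirectional 1-loop on the unit square at `(x,y)`, `(h', v')` is obtained by
negating the four edge values of that square, `g` is a height function for `(h, v)`,
and `g'` is a height function for `(h', v')` normalized to agree with `g` at some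
dual point `(x₀,y₀) ≠ (x,y)`, then `g' = g` away from `(x,y)` and
`g'(x,y) = g(x,y) + 2`. -/
theorem one_loop_reversal_height_change (h v : ℤ × ℤ → ℤ)
    (hh : ∀ p : ℤ × ℤ, h p ∈ ({-1, 0, 1} : Set ℤ))
    (hv : ∀ p : ℤ × ℤ, v p ∈ ({-1, 0, 1} : Set ℤ))
    (rule : ∀ a b : ℤ, h (a - 1, b) + v (a, b - 1) - h (a, b) - v (a, b) = 0)
    (x y : ℤ)
    (hccw : h (x, y) = 1 ∧ v (x + 1, y) = 1 ∧ h (x, y + 1) = -1 ∧ v (x, y) = -1)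
    (h' v' : ℤ × ℤ → ℤ)
    (hh' : ∀ p : ℤ × ℤ, (p = (x, y) ∨ p = (x, y + 1)) → h' p = -h p)
    (hh'' : ∀ p : ℤ × ℤ, ¬(p = (x, y) ∨ p = (x, y + 1)) → h' p = h p)
    (hv' : ∀ p : ℤ × ℤ, (p = (x, y) ∨ p = (x + 1, y)) → v' p = -v p)
    (hv'' : ∀ p : ℤ × ℤ, ¬(p = (x, y) ∨ p = (x + 1, y)) → v' p = v p)
    (g g' : ℤ × ℤ → ℤ)
    (hg1 : ∀ a b : ℤ, g (a + 1, b) - g (a, b) = v (a + 1, b))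
    (hg2 : ∀ a b : ℤ, g (a, b + 1) - g (a, b) = -h (a, b + 1))
    (hg'1 : ∀ a b : ℤ, g' (a + 1, b) - g' (a, b) = v' (a + 1, b))
    (hg'2 : ∀ a b : ℤ, g' (a, b + 1) - g' (a, b) = -h' (a, b + 1))
    (x₀ y₀ : ℤ) (hne : (x₀, y₀) ≠ (x, y)) (hnorm : g' (x₀, y₀) = g (x₀, y₀)) :
    (∀ p : ℤ × ℤ, p ≠ (x, y) → g' p = g p) ∧ g' (x, y) = g (x, y) + 2 := by
  obtain ⟨hc1, hc2, hc3, hc4⟩ := hccw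
  -- difference function
  set f : ℤ × ℤ → ℤ := fun p => g' p - g p with hf
  -- horizontal steps away from row y preserve f
  have hA : ∀ a b : ℤ, b ≠ y → f (a + 1, b) = f (a, b) := by
    intro a b hb
    have hne1 : ¬((a + 1, b) = (x, y) ∨ (a + 1, b) = (x + 1, y)) := by
      rintro (hp | hp) <;> exact hb (congrArg Prod.snd hp)
    have e0 := hv'' _ hne1
    have e1 := hg1 a b
    have e2 := hg'1 a b
    show g' (a + 1, b) - g (a + 1, b) = g' (a, b) - g (a, b)
    omega
  -- vertical steps away from column x preserve f
  have hB : ∀ a b : ℤ, a ≠ x → f (a, b + 1) = f (a, b) := by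
    intro a b ha
    have hne1 : ¬((a, b + 1) = (x, y) ∨ (a, b + 1) = (x, y + 1)) := by
      rintro (hp | hp) <;> exact ha (congrArg Prod.fst hp)
    have e0 := hh'' _ hne1
    have e1 := hg2 a b
    have e2 := hg'2 a b
    show g' (a, b + 1) - g (a, b + 1) = g' (a, b) - g (a, b)
    omega
  have rowconst : ∀ b : ℤ, b ≠ y → ∀ a a' : ℤ, f (a, b) = f (a', b) := by
    intro b hb
    exact constZ_aux (fun a => f (a, b)) (fun n => hA n b hb)
  have colconst : ∀ a : ℤ, a ≠ x → ∀ b b' : ℤ, f (a, b) = f (a, b') := by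
    intro a ha
    exact constZ_aux (fun b => f (a, b)) (fun n => hB a n ha)
  have key : ∀ a b : ℤ, (a, b) ≠ (x, y) → f (a, b) = f (x + 2, y + 2) := by
    intro a b hp
    by_cases hb : b = y
    · subst hb
      have ha : a ≠ x := fun h => hp (by rw [h])
      calc f (a, b) = f (a, b + 2) := colconst a ha b (b + 2)
        _ = f (x + 2, b + 2) := rowconst (b + 2) (by omega) a (x + 2)
    · calc f (a, b) = f (x + 2, b) := rowconst b hb a (x + 2)
        _ = f (x + 2, y + 2) := colconst (x + 2) (by omega) b (y + 2)
  have hzero : f (x + 2, y + 2) = 0 := by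
    have := key x₀ y₀ hne
    have h0 : f (x₀, y₀) = 0 := by show g' (x₀, y₀) - g (x₀, y₀) = 0; omega
    omega
  constructor
  · rintro ⟨a, b⟩ hp
    have := key a b hp
    have : g' (a, b) - g (a, b) = 0 := by rw [show g' (a, b) - g (a, b) = f (a, b) from rfl, this, hzero]
    omega
  · have hne1 : ((x : ℤ), y + 1) ≠ (x, y) := by
      intro hp
      have := congrArg Prod.snd hp
      simp at this
    have e0 : f (x, y + 1) = 0 := by rw [key x (y + 1) hne1, hzero]
    have e0' : g' (x, y + 1) - g (x, y + 1) = 0 := e0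
    have e1 := hg2 x y
    have e2 := hg'2 x y
    have e3 : h' (x, y + 1) = -h (x, y + 1) := hh' _ (Or.inr rfl)
    omega
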